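/- Let λ, μ > 0 and set ρ = λ/μ. Let X and S be independent random variables, X exponentially distributed with rate λ and S exponentially distributed with rate μ. Then E[(X+S)²]/(2(E[X]+E[S])) + E[S] = (1+2ρ+2ρ²)/(λ(1+ρ)). (This is the average age-upon-decisions of the M/M/1/1-M bufferless system.) -/

import Mathlib

open MeasureTheory ProbabilityTheory Real Set
open scoped ENNReal NNReal

lemma exp_moment_integrable {r : ℝ} (hr : 0 < r) (n : ℕ) :
    Integrable (fun x : ℝ => x ^ n) (expMeasure r) := by
  rw [expMeasure, gammaMeasure]
  unfold gammaPDF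
  rw [integrable_withDensity_iff
    ((measurable_gammaPDFReal 1 r).ennreal_ofReal)
    (Filter.Eventually.of_forall fun x => ENNReal.ofReal_lt_top)]
  have heq : ∀ x : ℝ, x ^ n * (ENNReal.ofReal (gammaPDFReal 1 r x)).toReal
      = x ^ n * gammaPDFReal 1 r x := fun x => by
    rw [ENNReal.toReal_ofReal (gammaPDFReal_nonneg zero_lt_one hr x)]
  simp_rw [heq]
  rw [← integrableOn_iff_integrable_of_support_subset (s := Ici (0:ℝ)) ?hsupp]
  case hsupp =>
    intro x hx
    simp only [Function.mem_support, ne_eq] at hx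
    by_contra hx0
    simp only [mem_Ici, not_le] at hx0
    exact hx (by rw [gammaPDFReal, if_neg (not_le.mpr hx0), mul_zero])
  rw [integrableOn_Ici_iff_integrableOn_Ioi]
  have H := (integrableOn_rpow_mul_exp_neg_mul_rpow (p := 1) (s := (n : ℝ))
    (neg_one_lt_zero.trans_le (Nat.cast_nonneg n)) zero_lt_one hr)
  refine MeasureTheory.IntegrableOn.congr_fun (H.const_mul r) (fun x hx => ?_) measurableSet_Ioi
  have hx0 : (0:ℝ) < x := hx
  rw [gammaPDFReal, if_pos hx0.le, rpow_one, Real.Gamma_one, sub_self, rpow_zero,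
    rpow_natCast, rpow_one, neg_mul]
  ring

lemma exp_moment {r : ℝ} (hr : 0 < r) (n : ℕ) :
    ∫ x, x ^ n ∂(expMeasure r) = (Nat.factorial n : ℝ) / r ^ n := by
  have hpdf : ProbabilityTheory.gammaPDF 1 r
      = fun x => ((gammaPDFReal 1 r x).toNNReal : ℝ≥0∞) := rfl
  rw [expMeasure, gammaMeasure, hpdf,
    integral_withDensity_eq_integral_smul
      (Measurable.real_toNNReal (measurable_gammaPDFReal 1 r)) _]
  have heq : ∀ x : ℝ, (gammaPDFReal 1 r x).toNNReal • x ^ n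
      = gammaPDFReal 1 r x * x ^ n := fun x => by
    rw [NNReal.smul_def, Real.coe_toNNReal _ (gammaPDFReal_nonneg zero_lt_one hr x),
      smul_eq_mul]
  simp_rw [heq]
  rw [← setIntegral_eq_integral_of_forall_compl_eq_zero (s := Ici (0:ℝ))
    (fun x hx => by rw [gammaPDFReal, if_neg (by simpa using hx), zero_mul]),
    integral_Ici_eq_integral_Ioi]
  have key : ∫ x in Ioi (0:ℝ), gammaPDFReal 1 r x * x ^ n
      = ∫ x in Ioi (0:ℝ), r * (x ^ (((n:ℝ)+1) - 1) * exp (-(r * x))) := by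
    refine setIntegral_congr_fun measurableSet_Ioi (fun x hx => ?_)
    have hx0 : (0:ℝ) < x := hx
    rw [gammaPDFReal, if_pos hx0.le, rpow_one, Real.Gamma_one, sub_self, rpow_zero,
      add_sub_cancel_right, rpow_natCast]
    ring
  rw [key, integral_const_mul, integral_rpow_mul_exp_neg_mul_Ioi (by positivity) hr]
  have : ((n:ℝ) + 1) = ((n + 1 : ℕ) : ℝ) := by push_cast; ring
  rw [Real.Gamma_nat_eq_factorial, this, rpow_natCast]
  field_simp
  rw [pow_succ]
  field_simp
  rw [← mul_pow, one_div, inv_mul_cancel₀ hr.ne', one_pow]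

lemma exp_comp_integrable {Ω : Type*} [MeasurableSpace Ω] (P : Measure Ω) {r : ℝ}
    (hr : 0 < r) {X : Ω → ℝ} (hX : Measurable X) (hd : Measure.map X P = expMeasure r)
    (n : ℕ) : Integrable (fun ω => X ω ^ n) P := by
  have h := exp_moment_integrable hr n
  rw [← hd] at h
  exact (integrable_map_measure (measurable_id.pow_const n).aestronglyMeasurable
    hX.aemeasurable).mp h

lemma exp_comp_moment {Ω : Type*} [MeasurableSpace Ω] (P : Measure Ω) {r : ℝ}
    (hr : 0 < r) {X : Ω → ℝ} (hX : Measurable X) (hd : Measure.map X P = expMeasure r)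
    (n : ℕ) : ∫ ω, X ω ^ n ∂P = (Nat.factorial n : ℝ) / r ^ n := by
  rw [← exp_moment hr n, ← hd]
  exact (integral_map (f := fun x : ℝ => x ^ n) hX.aemeasurable (by fun_prop)).symm

/-- The average age-upon-decisions of the M/M/1/1-M bufferless system:
`X` exponential with rate `lam`, `S` exponential with rate `mu`, independent; with `ρ = lam/mu`,
`E[(X+S)²]/(2(E[X]+E[S])) + E[S] = (1+2ρ+2ρ²)/(lam·(1+ρ))`. -/
theorem stmt_2 {Ω : Type*} [MeasurableSpace Ω] (P : Measure Ω) [IsProbabilityMeasure P]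
    (lam mu rho : ℝ) (hlam : 0 < lam) (hmu : 0 < mu) (hrho : rho = lam / mu)
    (X S : Ω → ℝ) (hX : Measurable X) (hS : Measurable S)
    (hindep : IndepFun X S P)
    (hXdist : Measure.map X P = expMeasure lam)
    (hSdist : Measure.map S P = expMeasure mu) :
    (∫ ω, (X ω + S ω) ^ 2 ∂P) / (2 * ((∫ ω, X ω ∂P) + ∫ ω, S ω ∂P)) + (∫ ω, S ω ∂P)
      = (1 + 2 * rho + 2 * rho ^ 2) / (lam * (1 + rho)) := by
  have hX1 : Integrable X P := by
    simpa using exp_comp_integrable P hlam hX hXdist 1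
  have hS1 : Integrable S P := by
    simpa using exp_comp_integrable P hmu hS hSdist 1
  have hX2 : Integrable (fun ω => X ω ^ 2) P := exp_comp_integrable P hlam hX hXdist 2
  have hS2 : Integrable (fun ω => S ω ^ 2) P := exp_comp_integrable P hmu hS hSdist 2
  have hXS : Integrable (fun ω => X ω * S ω) P := hindep.integrable_mul hX1 hS1
  have EX : ∫ ω, X ω ∂P = 1 / lam := by
    have := exp_comp_moment P hlam hX hXdist 1
    simpa [Nat.factorial] using this
  have ES : ∫ ω, S ω ∂P = 1 / mu := by
    have := exp_comp_moment P hmu hS hSdist 1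
    simpa [Nat.factorial] using this
  have EX2 : ∫ ω, X ω ^ 2 ∂P = 2 / lam ^ 2 := by
    have := exp_comp_moment P hlam hX hXdist 2
    simpa [Nat.factorial] using this
  have ES2 : ∫ ω, S ω ^ 2 ∂P = 2 / mu ^ 2 := by
    have := exp_comp_moment P hmu hS hSdist 2
    simpa [Nat.factorial] using this
  have EXS : ∫ ω, X ω * S ω ∂P = (1 / lam) * (1 / mu) := by
    rw [← EX, ← ES]
    exact hindep.integral_fun_mul_eq_mul_integral hX1.1 hS1.1
  have hexp : ∫ ω, (X ω + S ω) ^ 2 ∂P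
      = (∫ ω, X ω ^ 2 ∂P) + 2 * (∫ ω, X ω * S ω ∂P) + ∫ ω, S ω ^ 2 ∂P := by
    have h1 : (fun ω => (X ω + S ω) ^ 2)
        = fun ω => (X ω ^ 2 + 2 * (X ω * S ω)) + S ω ^ 2 := by
      funext ω; ring
    have i0 : Integrable (fun ω => 2 * (X ω * S ω)) P := hXS.const_mul 2
    have i1 : Integrable (fun ω => X ω ^ 2 + 2 * (X ω * S ω)) P := hX2.add i0
    rw [h1, integral_add i1 hS2, integral_add hX2 i0, MeasureTheory.integral_const_mul]
  rw [hexp, EX, ES, EX2, ES2, EXS, hrho]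
  have h1 : lam + mu ≠ 0 := by positivity
  field_simp
  ring
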